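/- Let (W,S) be a Coxeter system, A ⊆ S, and W^A the set of minimal length coset representatives of W/W_A. For any expression x̲ = (s_1,...,s_m), the element m_{x̲} := b_{s_1}···b_{s_m}·m_id of the spherical module M satisfies Deodhar's formula: m_{x̲} = Σ_{e̲ ⊆ x̲} v^{pdf(e̲)} · m_{x̲^{e̲}}, where the sum is over all subexpressions e̲ ∈ {0,1}^m, x̲^{e̲} is viewed in W/W_A, and pdf is the parabolic defect. -/

import Mathlib

open LaurentPolynomial

variable {B W : Type*} [Group W] {M : CoxeterMatrix B}

/-- The standard parabolic subgroup `W_A` generated by the simple reflections in `A`. -/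
def parabolic (cs : CoxeterSystem M W) (A : Set B) : Subgroup W :=
  Subgroup.closure (cs.simple '' A)

/-- `x` is a minimal length representative of its coset `x W_A`. -/
def IsMinRep (cs : CoxeterSystem M W) (A : Set B) (x : W) : Prop :=
  ∀ u ∈ parabolic cs A, cs.length x ≤ cs.length (x * u)

theorem isMinRep_one (cs : CoxeterSystem M W) (A : Set B) : IsMinRep cs A 1 := by
  intro u _
  rw [cs.length_one]
  exact Nat.zero_le _

/-- The length of a minimal representative of the coset `y W_A`. -/
noncomputable def cosetLength (cs : CoxeterSystem M W) (A : Set B) (y : W) : ℕ :=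
  sInf {l : ℕ | ∃ u ∈ parabolic cs A, cs.length (y * u) = l}

theorem exists_minRep (cs : CoxeterSystem M W) (A : Set B) (y : W) :
    ∃ z : W, (∃ u ∈ parabolic cs A, y * u = z) ∧ IsMinRep cs A z := by
  classical
  set S : Set ℕ := {l : ℕ | ∃ u ∈ parabolic cs A, cs.length (y * u) = l} with hS
  have hne : S.Nonempty := ⟨cs.length y, 1, one_mem _, by rw [mul_one]⟩
  obtain ⟨u, hu, hlen⟩ := Nat.sInf_mem hne
  refine ⟨y * u, ⟨u, hu, rfl⟩, ?_⟩
  intro u' hu'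
  rw [hlen]
  have hassoc : y * u * u' = y * (u * u') := by rw [mul_assoc]
  rw [hassoc]
  exact Nat.sInf_le ⟨u * u', mul_mem hu hu', rfl⟩

/-- The minimal length representative of the coset `y W_A`. -/
noncomputable def minRep (cs : CoxeterSystem M W) (A : Set B) (y : W) :
    {z : W // IsMinRep cs A z} :=
  ⟨(exists_minRep cs A y).choose, (exists_minRep cs A y).choose_spec.2⟩

/-- The letter of the subexpression `e̲` of the word `w` at position `t`:
`s_{w t}` if `e t = 1` and the identity if `e t = 0`. -/
def subLetter (cs : CoxeterSystem M W) {m : ℕ} (w : Fin m → B) (e : Fin m → Bool)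
    (t : Fin m) : W :=
  if e t then cs.simple (w t) else 1

/-- The product of the letters of the subexpression `e̲` from position `j` on, i.e. the
element `y_{m-j}` of Deodhar's sequence. -/
def suffixProd (cs : CoxeterSystem M W) {m : ℕ} (w : Fin m → B) (e : Fin m → Bool)
    (j : ℕ) : W :=
  (((List.ofFn (subLetter cs w e)).drop j)).prod

/-- Position `t` of the subexpression is decorated `S` (Stay): `s_{w t}` fixes the coset
of `y_{m-t-1}` in `W/W_A`. -/
def DecorS (cs : CoxeterSystem M W) (A : Set B) {m : ℕ} (w : Fin m → B)
    (e : Fin m → Bool) (t : Fin m) : Prop :=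
  (suffixProd cs w e (t + 1))⁻¹ * cs.simple (w t) * suffixProd cs w e (t + 1) ∈
    parabolic cs A

/-- Position `t` is decorated `U` (Up): `s_{w t}` raises the coset of `y_{m-t-1}` in
`W/W_A`. -/
def DecorU (cs : CoxeterSystem M W) (A : Set B) {m : ℕ} (w : Fin m → B)
    (e : Fin m → Bool) (t : Fin m) : Prop :=
  ¬ DecorS cs A w e t ∧
    cosetLength cs A (suffixProd cs w e (t + 1)) <
      cosetLength cs A (cs.simple (w t) * suffixProd cs w e (t + 1))

/-- Position `t` is decorated `D` (Down): `s_{w t}` lowers the coset of `y_{m-t-1}` in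
`W/W_A`. -/
def DecorD (cs : CoxeterSystem M W) (A : Set B) {m : ℕ} (w : Fin m → B)
    (e : Fin m → Bool) (t : Fin m) : Prop :=
  ¬ DecorS cs A w e t ∧
    cosetLength cs A (cs.simple (w t) * suffixProd cs w e (t + 1)) <
      cosetLength cs A (suffixProd cs w e (t + 1))

open scoped Classical in
/-- The parabolic defect of the subexpression `e̲` of `w`:
`pdf(e̲) = #{U0 or S1} − #{D0 or S0}`. -/
noncomputable def pdf (cs : CoxeterSystem M W) (A : Set B) {m : ℕ} (w : Fin m → B)
    (e : Fin m → Bool) : ℤ :=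
  ((Finset.univ.filter fun t : Fin m =>
      (DecorU cs A w e t ∧ e t = false) ∨ (DecorS cs A w e t ∧ e t = true)).card : ℤ) -
    ((Finset.univ.filter fun t : Fin m =>
      (DecorD cs A w e t ∧ e t = false) ∨ (DecorS cs A w e t ∧ e t = false)).card : ℤ)


/-! ### Auxiliary Coxeter-theoretic results -/

section DeodharAux

open CoxeterSystem List

set_option linter.unusedSectionVars false

variable [DecidableEq W] (cs : CoxeterSystem M W)

local prefix:100 "s" => cs.simple
local prefix:100 "π" => cs.wordProd
local prefix:100 "ris" => cs.rightInvSeq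

theorem simple_conj_cancel (i : B) (x : W) : s i * (s i * x * s i) * s i = x := by
  rw [← mul_assoc, ← mul_assoc, cs.simple_mul_simple_self, one_mul, mul_assoc,
    cs.simple_mul_simple_self, mul_one]

/-- The sign permutation used to prove the parity lemma. -/
def refPerm (i : B) : Equiv.Perm (W × ℤˣ) :=
  Function.Involutive.toPerm
    (fun p => (s i * p.1 * s i, if p.1 = s i then -p.2 else p.2)) (by
      rintro ⟨t, ε⟩
      by_cases h : t = s i
      · simp [h, cs.simple_mul_simple_self]
      · have h2 : s i * t * s i ≠ s i := by
          intro hc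
          apply h
          calc t = s i * (s i * t * s i) * s i := (simple_conj_cancel cs i t).symm
            _ = s i * s i * s i := by rw [hc]
            _ = s i := by rw [cs.simple_mul_simple_self, one_mul]
        simp only [h, if_false, h2, Prod.mk.injEq]
        exact ⟨simple_conj_cancel cs i t, trivial⟩)

theorem refPerm_apply (i : B) (p : W × ℤˣ) :
    refPerm cs i p = (s i * p.1 * s i, if p.1 = s i then -p.2 else p.2) := rfl

theorem refPerm_word (ω : List B) (t : W) (ε : ℤˣ) :
    ((ω.map (refPerm cs)).prod) (t, ε) =
      (π ω * t * (π ω)⁻¹, (-1 : ℤˣ) ^ ((ris ω).count t) * ε) := by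
  induction ω generalizing t ε with
  | nil => simp
  | cons i ω ih =>
    have hd : ris (i :: ω) = ((π ω)⁻¹ * s i * π ω) :: ris ω := rfl
    rw [List.map_cons, List.prod_cons]
    rw [Equiv.Perm.mul_apply, ih, refPerm_apply, hd, cs.wordProd_cons, List.count_cons]
    have hfst : s i * (π ω * t * (π ω)⁻¹) * s i = (s i * π ω) * t * (s i * π ω)⁻¹ := by
      rw [mul_inv_rev, cs.inv_simple]
      simp [mul_assoc]
    have hcond : (π ω * t * (π ω)⁻¹ = s i) ↔ (t = (π ω)⁻¹ * s i * π ω) := by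
      constructor
      · intro h
        rw [← h]
        simp [mul_assoc]
      · intro h
        rw [h]
        simp [mul_assoc]
    by_cases hc : t = (π ω)⁻¹ * s i * π ω
    · have h1 : π ω * t * (π ω)⁻¹ = s i := hcond.mpr hc
      have h2 : ((π ω)⁻¹ * s i * π ω == t) = true := beq_iff_eq.mpr hc.symm
      rw [if_pos h1]
      simp only [h2, if_true, Prod.mk.injEq]
      exact ⟨hfst, by rw [pow_succ, mul_neg_one, neg_mul]⟩
    · have h1 : ¬ (π ω * t * (π ω)⁻¹ = s i) := fun hh => hc (hcond.mp hh)
      have h2 : ((π ω)⁻¹ * s i * π ω == t) = false :=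
        beq_eq_false_iff_ne.mpr (fun hh => hc hh.symm)
      rw [if_neg h1]
      simp only [h2, Bool.false_eq_true, if_false, add_zero, Prod.mk.injEq]
      exact ⟨hfst, trivial⟩

theorem g_form (i i' : B) (d : ℕ) :
    (π (alternatingWord i i' d))⁻¹ * π (alternatingWord i i' (d + 1)) =
      (s i' * s i) ^ d * s i' := by
  have hsc : ∀ c : ℕ, s i' * (s i * s i') ^ c = (s i' * s i) ^ c * s i' := by
    intro c
    have : SemiconjBy (s i') (s i * s i') (s i' * s i) := by
      unfold SemiconjBy
      group
    exact (this.pow_right c).eq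
  have hinv : ∀ c : ℕ, ((s i * s i') ^ c)⁻¹ = (s i' * s i) ^ c := by
    intro c
    rw [← inv_pow, mul_inv_rev, cs.inv_simple, cs.inv_simple]
  rcases Nat.even_or_odd d with ⟨c, hc⟩ | ⟨c, hc⟩
  · subst hc
    rw [cs.prod_alternatingWord_eq_mul_pow, cs.prod_alternatingWord_eq_mul_pow]
    rw [if_pos ⟨c, rfl⟩, if_neg (Nat.not_even_iff_odd.mpr ⟨c, by ring⟩)]
    have h1 : (c + c) / 2 = c := by omega
    have h2 : (c + c + 1) / 2 = c := by omega
    rw [h1, h2, one_mul, hinv c, hsc c, ← mul_assoc, ← pow_add]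
  · subst hc
    rw [cs.prod_alternatingWord_eq_mul_pow, cs.prod_alternatingWord_eq_mul_pow]
    rw [if_neg (Nat.not_even_iff_odd.mpr ⟨c, rfl⟩), if_pos ⟨c + 1, by ring⟩]
    have h1 : (2 * c + 1) / 2 = c := by omega
    have h2 : (2 * c + 1 + 1) / 2 = c + 1 := by omega
    rw [h1, h2, one_mul, mul_inv_rev, hinv c, cs.inv_simple, mul_assoc, hsc (c + 1),
      ← mul_assoc, ← pow_add]
    have h3 : c + (c + 1) = 2 * c + 1 := by omega
    rw [h3]

theorem ris_alternatingWord (i i' : B) (n : ℕ) :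
    ris (alternatingWord i i' n) =
      ((List.range n).reverse).map (fun d => (s i' * s i) ^ d * s i') := by
  induction n with
  | zero => simp [alternatingWord]
  | succ n ih =>
    rw [alternatingWord_succ' i i' n]
    have hd : ris ((if Even n then i' else i) :: alternatingWord i i' n) =
        ((π (alternatingWord i i' n))⁻¹ * s (if Even n then i' else i) *
          π (alternatingWord i i' n)) :: ris (alternatingWord i i' n) := rfl
    rw [hd, ih]
    have hh : (π (alternatingWord i i' n))⁻¹ * s (if Even n then i' else i) *
        π (alternatingWord i i' n) = (s i' * s i) ^ n * s i' := by
      rw [← g_form cs i i' n]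
      rw [alternatingWord_succ' i i' n, cs.wordProd_cons]
      group
    rw [hh]
    rw [List.range_succ, List.reverse_append, List.reverse_singleton, List.singleton_append,
      List.map_cons]

theorem count_ris_alternatingWord_even (i i' : B) (t : W) :
    Even ((ris (alternatingWord i i' (2 * M i i'))).count t) := by
  set m := M i i' with hm
  rw [ris_alternatingWord]
  rw [List.map_reverse, List.count_reverse]
  have h2m : 2 * m = m + m := by omega
  rw [h2m, List.range_add]
  rw [List.map_append, List.count_append, List.map_map]
  have : ((List.range m).map ((fun d => (s i' * s i) ^ d * s i') ∘ (fun k => m + k))) =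
      (List.range m).map (fun d => (s i' * s i) ^ d * s i') := by
    apply List.map_congr_left
    intro d _
    show (s i' * s i) ^ (m + d) * s i' = (s i' * s i) ^ d * s i'
    rw [pow_add, cs.simple_mul_simple_pow' i i', one_mul]
  rw [this]
  exact ⟨_, rfl⟩

theorem alternatingWord_two_mul (i i' : B) (n : ℕ) :
    alternatingWord i i' (2 * (n + 1)) = i :: i' :: alternatingWord i i' (2 * n) := by
  have h1 : 2 * (n + 1) = (2 * n + 1) + 1 := by omega
  rw [h1, alternatingWord_succ' i i' (2 * n + 1), alternatingWord_succ' i i' (2 * n)]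
  rw [if_neg (Nat.not_even_iff_odd.mpr ⟨n, rfl⟩), if_pos ⟨n, by ring⟩]

theorem map_prod_alternatingWord_two_mul {G : Type*} [Monoid G] (g : B → G) (i i' : B) (n : ℕ) :
    ((alternatingWord i i' (2 * n)).map g).prod = (g i * g i') ^ n := by
  induction n with
  | zero => simp [alternatingWord]
  | succ n ih =>
    rw [alternatingWord_two_mul, List.map_cons, List.map_cons, List.prod_cons, List.prod_cons,
      ih, pow_succ']
    rw [mul_assoc]

theorem refPerm_liftable : CoxeterMatrix.IsLiftable M (refPerm cs) := by
  intro i i'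
  rw [← map_prod_alternatingWord_two_mul (refPerm cs) i i' (M i i')]
  apply Equiv.ext
  rintro ⟨t, ε⟩
  rw [refPerm_word]
  have hπ : π (alternatingWord i i' (2 * M i i')) = 1 := by
    rw [cs.prod_alternatingWord_eq_mul_pow, if_pos ⟨M i i', by ring⟩]
    have : 2 * M i i' / 2 = M i i' := by omega
    rw [this, one_mul, cs.simple_mul_simple_pow]
  obtain ⟨k, hk⟩ := count_ris_alternatingWord_even cs i i' t
  rw [hπ, hk]
  have he : ((-1 : ℤˣ)) ^ (k + k) = 1 := by
    rw [← two_mul, pow_mul]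
    norm_num
  simp [he]

/-- The sign homomorphism recording inversion parity. -/
def coxSign : W →* Equiv.Perm (W × ℤˣ) := cs.lift ⟨refPerm cs, refPerm_liftable cs⟩

theorem coxSign_wordProd (ω : List B) :
    coxSign cs (π ω) = ((ω.map (refPerm cs)).prod) := by
  unfold CoxeterSystem.wordProd
  rw [map_list_prod, List.map_map]
  congr 1
  apply List.map_congr_left
  intro b _
  exact cs.lift_apply_simple (refPerm_liftable cs) b

theorem count_parity_invariant {ω ω' : List B} (h : π ω = π ω') (t : W) :
    ((-1 : ℤˣ)) ^ ((ris ω).count t) = (-1 : ℤˣ) ^ ((ris ω').count t) := by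
  have h1 := refPerm_word cs ω t 1
  have h2 := refPerm_word cs ω' t 1
  rw [← coxSign_wordProd] at h1 h2
  rw [h] at h1
  have h3 := h1.symm.trans h2
  simpa using congrArg Prod.snd h3

theorem ris_append (α β : List B) :
    ris (α ++ β) = ((ris α).map (fun x => (π β)⁻¹ * x * π β)) ++ ris β := by
  induction α with
  | nil => simp
  | cons i α ih =>
    have h1 : ris ((i :: α) ++ β) = ((π (α ++ β))⁻¹ * s i * π (α ++ β)) :: ris (α ++ β) := rfl
    have h2 : ris (i :: α) = ((π α)⁻¹ * s i * π α) :: ris α := rfl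
    rw [h1, ih, h2, List.map_cons, List.cons_append]
    congr 1
    rw [cs.wordProd_append, mul_inv_rev]
    group

theorem parity_eq_of_pow_eq {c c' : ℕ} (h : (-1 : ℤˣ) ^ c = (-1 : ℤˣ) ^ c') :
    (Odd c ↔ Odd c') := by
  constructor
  · intro hc
    by_contra hc'
    rw [Nat.not_odd_iff_even] at hc'
    rw [hc.neg_one_pow, hc'.neg_one_pow] at h
    exact (by decide : (-1 : ℤˣ) ≠ 1) h
  · intro hc'
    by_contra hc
    rw [Nat.not_odd_iff_even] at hc
    rw [hc.neg_one_pow, hc'.neg_one_pow] at h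
    exact (by decide : (-1 : ℤˣ) ≠ 1) h.symm

theorem count_parity_iff {ω ω' : List B} (h : π ω = π ω') (t : W) :
    Odd ((ris ω).count t) ↔ Odd ((ris ω').count t) :=
  parity_eq_of_pow_eq (count_parity_invariant cs h t)

theorem count_refl_word_odd (α : List B) (i : B) :
    Odd ((ris (α ++ i :: α.reverse)).count (π α * s i * (π α)⁻¹)) := by
  induction α generalizing i with
  | nil => simp
  | cons j α ih =>
    set t' := π α * s i * (π α)⁻¹ with ht'
    have htinv : t'⁻¹ = t' := by
      rw [ht', mul_inv_rev, mul_inv_rev, cs.inv_simple, inv_inv]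
      group
    set β := α ++ i :: α.reverse with hβ
    have hπβ : π β = t' := by
      rw [hβ, cs.wordProd_append, cs.wordProd_cons, cs.wordProd_reverse, ht']
      rw [mul_assoc]
    have hword : (j :: α) ++ i :: (j :: α).reverse = j :: β.concat j := by
      simp [hβ, List.concat_eq_append]
    rw [hword]
    have htarget : π (j :: α) * s i * (π (j :: α))⁻¹ = s j * t' * s j := by
      rw [cs.wordProd_cons, mul_inv_rev, cs.inv_simple, ht']
      group
    rw [htarget]
    have h1 : ris (j :: β.concat j) =
        ((π (β.concat j))⁻¹ * s j * π (β.concat j)) :: ris (β.concat j) := rfl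
    rw [h1, cs.rightInvSeq_concat]
    have hπc : π (β.concat j) = t' * s j := by rw [cs.wordProd_concat, hπβ]
    have hhead : (π (β.concat j))⁻¹ * s j * π (β.concat j) = s j * t' * s j * t' * s j := by
      rw [hπc, mul_inv_rev, cs.inv_simple, htinv]
      group
    rw [hhead]
    have hconj_inj : Function.Injective (fun x : W => (MulAut.conj (s j)) x) :=
      (MulAut.conj (s j)).injective
    have hcount_map : ((ris β).map (MulAut.conj (s j))).count (s j * t' * s j) =
        (ris β).count t' := by
      have : s j * t' * s j = (MulAut.conj (s j)) t' := by
        simp [MulAut.conj_apply, cs.inv_simple]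
      rw [this]
      exact List.count_map_of_injective _ _ hconj_inj _
    by_cases hc : t' = s j
    · have hh : s j * t' * s j * t' * s j = s j * t' * s j := by
        simp [hc, cs.simple_mul_simple_self]
      have hcj : s j = s j * t' * s j := by
        simp [hc, cs.simple_mul_simple_self]
      rw [List.count_cons, List.concat_eq_append, List.count_append, List.count_singleton']
      obtain ⟨k, hk⟩ := ih i
      rw [← hβ] at hk
      rw [← ht'] at hk
      refine ⟨k + 1, ?_⟩
      rw [hcount_map, hk]
      rw [if_pos (beq_iff_eq.mpr hh), if_pos hcj]
      omega
    · have hh : s j * t' * s j * t' * s j ≠ s j * t' * s j := by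
        intro hcc
        apply hc
        have hcc' : (s j * t' * s j) * (t' * s j) = (s j * t' * s j) * 1 := by
          rw [mul_one, ← mul_assoc]
          exact hcc
        have h2 : t' * s j = 1 := mul_left_cancel hcc'
        calc t' = t' * s j * s j := by rw [mul_assoc, cs.simple_mul_simple_self, mul_one]
          _ = 1 * s j := by rw [h2]
          _ = s j := one_mul _
      have hcj : s j ≠ s j * t' * s j := by
        intro hcc
        apply hc
        have : s j * s j * s j = s j * (s j * t' * s j) * s j := by rw [← hcc]
        rw [cs.simple_mul_simple_self, one_mul, simple_conj_cancel] at this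
        exact this.symm
      rw [List.count_cons, List.concat_eq_append, List.count_append, List.count_singleton']
      have hh' : ¬ ((s j * t' * s j * t' * s j == s j * t' * s j) = true) := by
        simpa using hh
      rw [if_neg hh', if_neg hcj]
      obtain ⟨k, hk⟩ := ih i
      rw [← hβ] at hk
      rw [← ht'] at hk
      refine ⟨k, ?_⟩
      rw [hcount_map, hk]
      omega

theorem count_odd_iff_isRightInversion :
    ∀ (n : ℕ) (w : W), cs.length w = n → ∀ t : W, cs.IsReflection t →
      ∀ ω : List B, π ω = w →
        (Odd ((ris ω).count t) ↔ cs.length (w * t) < cs.length w) := by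
  intro n
  induction n using Nat.strong_induction_on with
  | _ n IH =>
    intro w hw t ht ω hω
    rcases Nat.eq_zero_or_pos n with hn | hn
    · -- w = 1
      have hw1 : w = 1 := by
        rw [← cs.length_eq_zero_iff, hw, hn]
      subst hw1
      constructor
      · intro hodd
        exfalso
        have := count_parity_iff cs (ω' := []) (by simpa using hω) t
        rw [this] at hodd
        simp at hodd
      · intro hlt
        exfalso
        rw [cs.length_one, one_mul] at hlt
        omega
    · -- w ≠ 1
      have hwne : w ≠ 1 := by
        intro hc
        rw [hc, cs.length_one] at hw
        omega
      obtain ⟨i, hdesc⟩ := cs.exists_leftDescent_of_ne_one hwne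
      set w' := s i * w with hw'
      have hww : w = s i * w' := by
        rw [hw', ← mul_assoc, cs.simple_mul_simple_self, one_mul]
      have hlw' : cs.length w' = n - 1 := by
        have h1 : cs.length w' < cs.length w := hdesc
        have h2 : cs.length w' = cs.length w + 1 ∨ cs.length w' + 1 = cs.length w := by
          rw [hw']
          rcases cs.length_simple_mul w i with h | h
          · exact Or.inl h
          · exact Or.inr (by omega)
        omega
      obtain ⟨ω', hred', hωw'⟩ := cs.exists_reduced_word' w'
      have hπcons : π (i :: ω') = w := by rw [cs.wordProd_cons, ← hωw', ← hww]
      have hparity := count_parity_iff cs (ω' := i :: ω') (hω.trans hπcons.symm) t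
      have hd : ris (i :: ω') = ((π ω')⁻¹ * s i * π ω') :: ris ω' := rfl
      have hhead : (π ω')⁻¹ * s i * π ω' = w'⁻¹ * s i * w' := by rw [← hωw']
      rw [hparity, hd, hhead, List.count_cons]
      by_cases hc : t = w'⁻¹ * s i * w'
      · -- case A
        have hwt : w * t = w' := by
          rw [hww, hc]
          have hfree : s i * w' * (w'⁻¹ * s i * w') = s i * (s i * w') := by group
          rw [hfree, ← mul_assoc, cs.simple_mul_simple_self, one_mul]
        have hw't : w' * t = w := by
          rw [hc, hww]
          group
        have hIH := IH (n - 1) (by omega) w' hlw' t ht ω' hωw'.symm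
        rw [hw't, hw, hlw'] at hIH
        have hcount' : ¬ Odd ((ris ω').count t) := by
          rw [hIH]
          omega
        rw [if_pos (beq_iff_eq.mpr hc.symm)]
        rw [hwt, hw, hlw']
        constructor
        · intro _
          omega
        · intro _
          rw [Nat.odd_add_one]
          exact hcount'
      · -- case B
        have hne : ¬ ((w'⁻¹ * s i * w' == t) = true) := by
          rw [beq_iff_eq]
          exact fun hh => hc hh.symm
        rw [if_neg hne, add_zero]
        have hIH := IH (n - 1) (by omega) w' hlw' t ht ω' hωw'.symm
        rw [hIH]
        -- now show ℓ(w' t) < ℓ(w') ↔ ℓ(w t) < ℓ(w)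
        constructor
        · intro hlt
          have h1 : cs.length (w * t) ≤ cs.length (w' * t) + 1 := by
            rw [hww, mul_assoc]
            rcases cs.length_simple_mul (w' * t) i with h | h <;> omega
          rw [hw]
          omega
        · intro hlt
          by_contra hnlt
          have hgt : cs.length w' < cs.length (w' * t) := by
            rcases Nat.lt_or_ge (cs.length (w' * t)) (cs.length w') with h | h
            · exact absurd h hnlt
            · rcases Nat.eq_or_lt_of_le h with h | h
              · exact absurd h.symm (ht.length_mul_left_ne w')
              · exact h
          -- derive a contradiction : show count is odd using v = w * t
          set v := w * t with hv
          have hvt : v * t = w := by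
            rw [hv, mul_assoc, ht.mul_self, mul_one]
          have hlv : cs.length v < n := by
            rw [hv, ← hw]
            exact hlt
          obtain ⟨ωv, hredv, hωv⟩ := cs.exists_reduced_word' v
          obtain ⟨u, k, htuk⟩ := id ht
          obtain ⟨αu, hredu, hαu⟩ := cs.exists_reduced_word' u
          set ρ := αu ++ k :: αu.reverse with hρ
          have hπρ : π ρ = t := by
            rw [hρ, cs.wordProd_append, cs.wordProd_cons, cs.wordProd_reverse, ← hαu, htuk]
            rw [mul_assoc]
          have hπfull : π (ωv ++ ρ) = w := by
            rw [cs.wordProd_append, hπρ, ← hωv, hvt]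
          -- count t in ris (ωv ++ ρ) is odd
          have hcount_full : Odd ((ris (ωv ++ ρ)).count t) := by
            rw [ris_append]
            rw [List.count_append]
            have hmap : ((ris ωv).map (fun x => (π ρ)⁻¹ * x * π ρ)).count t =
                (ris ωv).count t := by
              have hinj : Function.Injective (fun x : W => (π ρ)⁻¹ * x * π ρ) := by
                intro a b hab
                simpa using hab
              have htt : t = (fun x : W => (π ρ)⁻¹ * x * π ρ) t := by
                simp only [hπρ]
                rw [ht.inv, ht.mul_self, one_mul]
              nth_rw 1 [htt]
              exact List.count_map_of_injective _ _ hinj _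
            rw [hmap]
            have hveven : ¬ Odd ((ris ωv).count t) := by
              have := IH (cs.length v) (by omega) v rfl t ht ωv hωv.symm
              rw [this, hvt, hw]
              omega
            have hρodd : Odd ((ris ρ).count t) := by
              have := count_refl_word_odd cs αu k
              rw [← hαu, ← htuk] at this
              exact this
            rw [Nat.not_odd_iff_even] at hveven
            exact hveven.add_odd hρodd
          have h6 := (count_parity_iff cs
            (show π (ωv ++ ρ) = π (i :: ω') by rw [hπfull, hπcons]) t).mp hcount_full
          have h7 : Odd ((ris ω').count t) := by
            rw [hd, hhead, List.count_cons, if_neg hne, add_zero] at h6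
            exact h6
          exact hnlt (hIH.mp h7)

variable {A : Set B}

theorem wordProd_mem_parabolic {l : List B} (hl : ∀ b ∈ l, b ∈ A) :
    π l ∈ parabolic cs A := by
  induction l with
  | nil => simpa using one_mem _
  | cons i l ih =>
    rw [cs.wordProd_cons]
    refine mul_mem ?_ (ih fun b hb => hl b (List.mem_cons_of_mem _ hb))
    exact Subgroup.subset_closure ⟨i, hl i List.mem_cons_self, rfl⟩

theorem exists_word_of_mem_parabolic {u : W} (hu : u ∈ parabolic cs A) :
    ∃ l : List B, (∀ b ∈ l, b ∈ A) ∧ π l = u := by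
  refine Subgroup.closure_induction ?_ ?_ ?_ ?_ hu
  · rintro x ⟨a, ha, rfl⟩
    exact ⟨[a], by simpa using ha, by simp⟩
  · exact ⟨[], by simp, by simp⟩
  · rintro x y _ _ ⟨lx, hlx, rfl⟩ ⟨ly, hly, rfl⟩
    exact ⟨lx ++ ly, by
      intro b hb
      rcases List.mem_append.mp hb with h | h
      exacts [hlx b h, hly b h], by rw [cs.wordProd_append]⟩
  · rintro x _ ⟨l, hl, rfl⟩
    exact ⟨l.reverse, fun b hb => hl b (List.mem_reverse.mp hb), by rw [cs.wordProd_reverse]⟩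

theorem ris_mem_parabolic {l : List B} (hl : ∀ b ∈ l, b ∈ A) {x : W}
    (hx : x ∈ ris l) : x ∈ parabolic cs A := by
  induction l with
  | nil => simp at hx
  | cons i l ih =>
    have hd : ris (i :: l) = ((π l)⁻¹ * s i * π l) :: ris l := rfl
    rw [hd, List.mem_cons] at hx
    rcases hx with rfl | hx
    · have h1 : π l ∈ parabolic cs A :=
        wordProd_mem_parabolic cs (fun b hb => hl b (List.mem_cons_of_mem _ hb))
      have h2 : s i ∈ parabolic cs A :=
        Subgroup.subset_closure ⟨i, hl i List.mem_cons_self, rfl⟩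
      exact mul_mem (mul_mem (inv_mem h1) h2) h1
    · exact ih (fun b hb => hl b (List.mem_cons_of_mem _ hb)) hx

/-- The minimal length of a word in the letters of `A` representing `u`. -/
noncomputable def paraLen (A : Set B) (u : W) : ℕ :=
  sInf {n | ∃ l : List B, (∀ b ∈ l, b ∈ A) ∧ l.length = n ∧ π l = u}

theorem paraLen_spec {u : W} (hu : u ∈ parabolic cs A) :
    ∃ l : List B, (∀ b ∈ l, b ∈ A) ∧ l.length = paraLen cs A u ∧ π l = u := by
  obtain ⟨l, hl, hπ⟩ := exists_word_of_mem_parabolic cs hu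
  have hne : {n | ∃ l : List B, (∀ b ∈ l, b ∈ A) ∧ l.length = n ∧ π l = u}.Nonempty :=
    ⟨l.length, l, hl, rfl, hπ⟩
  exact Nat.sInf_mem hne

theorem paraLen_le {u : W} {l : List B} (hl : ∀ b ∈ l, b ∈ A) (hπ : π l = u) :
    paraLen cs A u ≤ l.length :=
  Nat.sInf_le ⟨l, hl, rfl, hπ⟩

theorem paraLen_eq_zero_iff {u : W} (hu : u ∈ parabolic cs A) :
    paraLen cs A u = 0 ↔ u = 1 := by
  constructor
  · intro h
    obtain ⟨l, _, hlen, hπ⟩ := paraLen_spec cs hu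
    rw [h, List.length_eq_zero_iff] at hlen
    rw [← hπ, hlen, cs.wordProd_nil]
  · intro h
    subst h
    have := paraLen_le cs (A := A) (u := (1 : W)) (l := []) (by simp) (by simp)
    simpa using this

theorem mem_ris_of_isRightInversion {w t : W} (ht : cs.IsReflection t)
    (hlt : cs.length (w * t) < cs.length w) {ω : List B} (hω : π ω = w) :
    t ∈ ris ω := by
  have hodd := (count_odd_iff_isRightInversion cs (cs.length w) w rfl t ht ω hω).mpr hlt
  by_contra hmem
  rw [← List.count_pos_iff, Nat.pos_iff_ne_zero, not_not] at hmem
  rw [hmem] at hodd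
  simp at hodd

/-- Key lemma: multiplying a minimal coset representative by an element of the parabolic
subgroup adds the parabolic length. -/
theorem length_isMinRep_mul {z : W} (hz : IsMinRep cs A z) {u : W}
    (hu : u ∈ parabolic cs A) :
    cs.length (z * u) = cs.length z + paraLen cs A u := by
  obtain ⟨n, hn⟩ : ∃ n, paraLen cs A u = n := ⟨_, rfl⟩
  rw [hn]
  induction n using Nat.strong_induction_on generalizing u with
  | _ n IH =>
    rcases Nat.eq_zero_or_pos n with h0 | hpos
    · have : u = 1 := (paraLen_eq_zero_iff cs hu).mp (by omega)
      subst this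
      simp [h0]
    · obtain ⟨l, hlA, hlen, hπ⟩ := paraLen_spec cs hu
      have hlne : l ≠ [] := by
        intro hc
        rw [hc] at hlen
        simp at hlen
        omega
      set a := l.getLast hlne with ha
      set l' := l.dropLast with hl'
      have hsplit : l = l' ++ [a] := (List.dropLast_append_getLast hlne).symm
      have hl'A : ∀ b ∈ l', b ∈ A := fun b hb => hlA b (by
        rw [hsplit]; exact List.mem_append_left _ hb)
      have haA : a ∈ A := hlA a (by rw [hsplit]; exact List.mem_append_right _ (by simp))
      set u' := π l' with hu'def
      have hu' : u' ∈ parabolic cs A := wordProd_mem_parabolic cs hl'A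
      have hu_eq : u = u' * s a := by
        rw [hu'def, ← cs.wordProd_singleton, ← cs.wordProd_append, ← hsplit, hπ]
      have hlen' : l'.length = n - 1 := by
        have : l.length = l'.length + 1 := by rw [hsplit]; simp
        omega
      have hpll' : paraLen cs A u' = n - 1 := by
        refine le_antisymm (by rw [← hlen']; exact paraLen_le cs hl'A rfl) ?_
        by_contra hlt
        push_neg at hlt
        obtain ⟨m', hm'A, hm'len, hm'π⟩ := paraLen_spec cs hu'
        have : paraLen cs A u ≤ paraLen cs A u' + 1 := by
          refine le_trans (paraLen_le cs (l := m' ++ [a]) ?_ ?_) (by simp [hm'len])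
          · intro b hb
            rcases List.mem_append.mp hb with h | h
            · exact hm'A b h
            · rw [List.mem_singleton] at h
              rw [h]
              exact haA
          · rw [cs.wordProd_append, hm'π, cs.wordProd_singleton, ← hu_eq]
        omega
      have hIH : cs.length (z * u') = cs.length z + (n - 1) :=
        IH (n - 1) (by omega) hu' hpll'
      -- show that multiplication by s a goes up
      have hup : cs.length (z * u' * s a) = cs.length (z * u') + 1 := by
        rcases cs.length_mul_simple (z * u') a with h | h
        · exact h
        · -- descent: contradiction
          exfalso
          obtain ⟨ωz, hred, hωz⟩ := cs.exists_reduced_word' z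
          have hπfull : π (ωz ++ l') = z * u' := by
            rw [cs.wordProd_append, ← hωz, hu'def]
          have hmem : s a ∈ ris (ωz ++ l') := by
            refine mem_ris_of_isRightInversion cs (cs.isReflection_simple a) ?_ hπfull
            omega
          rw [ris_append, List.mem_append] at hmem
          rcases hmem with hmem | hmem
          · obtain ⟨x, hx, hxeq⟩ := List.mem_map.mp hmem
            have hxP : x ∈ parabolic cs A := by
              have : x = u' * s a * u'⁻¹ := by
                rw [← hxeq]
                rw [hu'def]
                group
              rw [this]
              exact mul_mem (mul_mem hu' (Subgroup.subset_closure ⟨a, haA, rfl⟩)) (inv_mem hu')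
            have hinv : cs.IsRightInversion (π ωz) x :=
              cs.isRightInversion_of_mem_rightInvSeq hred hx
            have : cs.length z ≤ cs.length (z * x) := hz x hxP
            rw [← hωz] at hinv
            exact absurd hinv.2 (by omega)
          · obtain ⟨j, hj, hjeq⟩ := List.mem_iff_getElem.mp hmem
            have hjlen : j < l'.length := by simpa using hj
            have hgetD : (ris l').getD j 1 = s a := by
              rw [List.getD_eq_getElem _ _ hj, hjeq]
            have herase : u' * s a = π (l'.eraseIdx j) := by
              rw [← hgetD, hu'def]
              exact cs.wordProd_mul_getD_rightInvSeq l' j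
            have : paraLen cs A u ≤ n - 2 := by
              rw [hu_eq, herase]
              refine le_trans (paraLen_le cs ?_ rfl) ?_
              · intro b hb
                exact hl'A b (List.mem_of_mem_eraseIdx hb)
              · have hle : (l'.eraseIdx j).length + 1 = l'.length :=
                  List.length_eraseIdx_add_one hjlen
                omega
            omega
      rw [hu_eq, ← mul_assoc, hup, hIH]
      omega

theorem minRep_coset (y : W) :
    ∃ u ∈ parabolic cs A, y * u = (minRep cs A y).1 :=
  (exists_minRep cs A y).choose_spec.1

theorem minRep_eq {y z : W} (hz : IsMinRep cs A z) {u : W} (hu : u ∈ parabolic cs A)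
    (h : y * u = z) : (minRep cs A y).1 = z := by
  obtain ⟨u₀, hu₀, h₀⟩ := minRep_coset cs (A := A) y
  have hz₀ : IsMinRep cs A (minRep cs A y).1 := (minRep cs A y).2
  have h1 : z * (u⁻¹ * u₀) = (minRep cs A y).1 := by
    rw [← h, ← h₀]
    group
  have h2 : (minRep cs A y).1 * (u₀⁻¹ * u) = z := by
    rw [← h₀, ← h]
    group
  have e1 : cs.length (minRep cs A y).1 =
      cs.length z + paraLen cs A (u⁻¹ * u₀) := by
    rw [← h1]
    exact length_isMinRep_mul cs hz (mul_mem (inv_mem hu) hu₀)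
  have e2 : cs.length z =
      cs.length (minRep cs A y).1 + paraLen cs A (u₀⁻¹ * u) := by
    rw [← h2]
    exact length_isMinRep_mul cs hz₀ (mul_mem (inv_mem hu₀) hu)
  have h3 : paraLen cs A (u⁻¹ * u₀) = 0 := by omega
  have h4 : u⁻¹ * u₀ = 1 :=
    (paraLen_eq_zero_iff cs (mul_mem (inv_mem hu) hu₀)).mp h3
  rw [← h1, h4, mul_one]

theorem cosetLength_eq_length_minRep (y : W) :
    cosetLength cs A y = cs.length (minRep cs A y).1 := by
  obtain ⟨u₀, hu₀, h₀⟩ := minRep_coset cs (A := A) y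
  have hz₀ : IsMinRep cs A (minRep cs A y).1 := (minRep cs A y).2
  refine le_antisymm (Nat.sInf_le ⟨u₀, hu₀, by rw [h₀]⟩) ?_
  have hne : {l : ℕ | ∃ u ∈ parabolic cs A, cs.length (y * u) = l}.Nonempty :=
    ⟨cs.length y, 1, one_mem _, by rw [mul_one]⟩
  obtain ⟨u₁, hu₁, h₁⟩ := Nat.sInf_mem hne
  rw [show sInf {l : ℕ | ∃ u ∈ parabolic cs A, cs.length (y * u) = l} =
    cosetLength cs A y from rfl] at h₁
  rw [← h₁]
  have : y * u₁ = (minRep cs A y).1 * (u₀⁻¹ * u₁) := by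
    rw [← h₀]
    group
  rw [this]
  exact hz₀ _ (mul_mem (inv_mem hu₀) hu₁)

theorem minRep_mul_parabolic (y : W) {u : W} (hu : u ∈ parabolic cs A) :
    (minRep cs A (y * u)).1 = (minRep cs A y).1 := by
  obtain ⟨u₀, hu₀, h₀⟩ := minRep_coset cs (A := A) y
  exact minRep_eq cs (minRep cs A y).2 (mul_mem (inv_mem hu) hu₀)
    (by rw [← h₀]; group)

theorem isReflection_conj_simple (i : B) (v : W) :
    cs.IsReflection (v⁻¹ * s i * v) := ⟨v⁻¹, i, by group⟩

/-- Deodhar's lemma: if `z` is a minimal coset representative and `s i` does not fix the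
coset of `z`, then `s i * z` is a minimal coset representative. -/
theorem deodhar_lemma {z : W} (hz : IsMinRep cs A z) (i : B)
    (hS : z⁻¹ * s i * z ∉ parabolic cs A) : IsMinRep cs A (s i * z) := by
  intro u hu
  rcases cs.length_simple_mul z i with hupz | hdnz
  · -- ℓ(s i z) = ℓ z + 1
    by_contra hlt
    push_neg at hlt
    set t := (z * u)⁻¹ * s i * (z * u) with htdef
    have ht : cs.IsReflection t := isReflection_conj_simple cs i (z * u)
    have hzut : (z * u) * t = s i * (z * u) := by
      rw [htdef]
      group
    have hlzu : cs.length (z * u) = cs.length z + paraLen cs A u :=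
      length_isMinRep_mul cs hz hu
    have hne := ht.length_mul_left_ne (z * u)
    have hassoc : s i * (z * u) = (s i * z) * u := by group
    rw [hzut, hassoc] at hne
    have hlt2 : cs.length ((z * u) * t) < cs.length (z * u) := by
      rw [hzut, hassoc]
      omega
    obtain ⟨ωz, hred, hωz⟩ := cs.exists_reduced_word' z
    obtain ⟨lu, hluA, hπlu⟩ := exists_word_of_mem_parabolic cs hu
    have hπfull : π (ωz ++ lu) = z * u := by
      rw [cs.wordProd_append, ← hωz, hπlu]
    have hmem := mem_ris_of_isRightInversion cs ht hlt2 hπfull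
    rw [ris_append, List.mem_append] at hmem
    rcases hmem with hmem | hmem
    · obtain ⟨x, hx, hxeq⟩ := List.mem_map.mp hmem
      have hxval : x = z⁻¹ * s i * z := by
        have : x = π lu * t * (π lu)⁻¹ := by
          rw [← hxeq]
          group
        rw [this, hπlu, htdef]
        group
      have hinv : cs.IsRightInversion (π ωz) x :=
        cs.isRightInversion_of_mem_rightInvSeq hred hx
      rw [← hωz] at hinv
      have h5 : z * x = s i * z := by
        rw [hxval]
        group
      have h6 := hinv.2
      rw [h5] at h6
      omega
    · have htP : t ∈ parabolic cs A := ris_mem_parabolic cs hluA hmem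
      apply hS
      have : z⁻¹ * s i * z = u * t * u⁻¹ := by
        rw [htdef]
        group
      rw [this]
      exact mul_mem (mul_mem hu htP) (inv_mem hu)
  · -- ℓ(s i z) + 1 = ℓ z
    have h1 : cs.length (z * u) ≤ cs.length ((s i * z) * u) + 1 := by
      have : z * u = s i * ((s i * z) * u) := by
        rw [← mul_assoc, ← mul_assoc, cs.simple_mul_simple_self, one_mul]
      rw [this]
      rcases cs.length_simple_mul ((s i * z) * u) i with h | h <;> omega
    have h2 : cs.length z ≤ cs.length (z * u) := hz u hu
    omega

section Bridge

variable {m : ℕ} (w : Fin (m + 1) → B) (c : Bool) (e' : Fin m → Bool)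

theorem ofFn_subLetter_cons :
    List.ofFn (subLetter cs w (Fin.cons c e')) =
      (if c then s (w 0) else 1) :: List.ofFn (subLetter cs (w ∘ Fin.succ) e') := by
  rw [List.ofFn_succ]
  have h0 : subLetter cs w (Fin.cons c e') 0 = (if c then s (w 0) else 1) := by
    simp [subLetter, Fin.cons_zero]
  have h1 : (List.ofFn fun i : Fin m => subLetter cs w (Fin.cons c e') i.succ) =
      List.ofFn (subLetter cs (w ∘ Fin.succ) e') := by
    exact congrArg List.ofFn (funext fun t => by simp [subLetter, Fin.cons_succ])
  rw [h0, h1]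

theorem suffixProd_cons_succ (j : ℕ) :
    suffixProd cs w (Fin.cons c e') (j + 1) = suffixProd cs (w ∘ Fin.succ) e' j := by
  unfold suffixProd
  rw [ofFn_subLetter_cons, List.drop_succ_cons]

theorem suffixProd_cons_zero :
    suffixProd cs w (Fin.cons c e') 0 =
      (if c then s (w 0) else 1) * suffixProd cs (w ∘ Fin.succ) e' 0 := by
  unfold suffixProd
  rw [ofFn_subLetter_cons, List.drop_zero, List.prod_cons, List.drop_zero]

variable (A : Set B)

theorem decorS_cons_succ (t : Fin m) :
    DecorS cs A w (Fin.cons c e') t.succ ↔ DecorS cs A (w ∘ Fin.succ) e' t := by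
  unfold DecorS
  rw [show ((t.succ : Fin (m + 1)) : ℕ) + 1 = ((t : ℕ) + 1) + 1 by rw [Fin.val_succ],
    suffixProd_cons_succ]
  exact Iff.rfl

theorem decorU_cons_succ (t : Fin m) :
    DecorU cs A w (Fin.cons c e') t.succ ↔ DecorU cs A (w ∘ Fin.succ) e' t := by
  unfold DecorU
  rw [decorS_cons_succ,
    show ((t.succ : Fin (m + 1)) : ℕ) + 1 = ((t : ℕ) + 1) + 1 by rw [Fin.val_succ],
    suffixProd_cons_succ]
  exact Iff.rfl

theorem decorD_cons_succ (t : Fin m) :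
    DecorD cs A w (Fin.cons c e') t.succ ↔ DecorD cs A (w ∘ Fin.succ) e' t := by
  unfold DecorD
  rw [decorS_cons_succ,
    show ((t.succ : Fin (m + 1)) : ℕ) + 1 = ((t : ℕ) + 1) + 1 by rw [Fin.val_succ],
    suffixProd_cons_succ]
  exact Iff.rfl

theorem suffixProd_cons_one :
    suffixProd cs w (Fin.cons c e') (((0 : Fin (m + 1)) : ℕ) + 1) =
      suffixProd cs (w ∘ Fin.succ) e' 0 := by
  rw [Fin.val_zero]
  exact suffixProd_cons_succ cs w c e' 0

theorem decorS_cons_zero :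
    DecorS cs A w (Fin.cons c e') 0 ↔
      (suffixProd cs (w ∘ Fin.succ) e' 0)⁻¹ * s (w 0) *
        suffixProd cs (w ∘ Fin.succ) e' 0 ∈ parabolic cs A := by
  unfold DecorS
  rw [suffixProd_cons_one]

open scoped Classical in
theorem pdf_eq_sum {m' : ℕ} (w' : Fin m' → B) (e : Fin m' → Bool) :
    pdf cs A w' e = ∑ t : Fin m',
      (((if (DecorU cs A w' e t ∧ e t = false) ∨ (DecorS cs A w' e t ∧ e t = true)
          then 1 else 0) : ℤ) -
       ((if (DecorD cs A w' e t ∧ e t = false) ∨ (DecorS cs A w' e t ∧ e t = false)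
          then 1 else 0) : ℤ)) := by
  unfold pdf
  rw [Finset.card_filter, Finset.card_filter]
  push_cast
  rw [Finset.sum_sub_distrib]

open scoped Classical in
theorem pdf_cons :
    pdf cs A w (Fin.cons c e') =
      (((if (DecorU cs A w (Fin.cons c e') 0 ∧ c = false) ∨
          (DecorS cs A w (Fin.cons c e') 0 ∧ c = true) then 1 else 0) : ℤ) -
       ((if (DecorD cs A w (Fin.cons c e') 0 ∧ c = false) ∨
          (DecorS cs A w (Fin.cons c e') 0 ∧ c = false) then 1 else 0) : ℤ)) +
      pdf cs A (w ∘ Fin.succ) e' := by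
  rw [pdf_eq_sum, pdf_eq_sum, Fin.sum_univ_succ, Fin.cons_zero]
  congr 1
  apply Finset.sum_congr rfl
  intro t _
  rw [decorU_cons_succ, decorS_cons_succ, decorD_cons_succ, Fin.cons_succ]

end Bridge

end DeodharAux

/-- (Deodhar's formula in the spherical module.)  Let `(W, S)` be a
Coxeter system, `A ⊆ S`, and `W^A` the minimal length coset representatives of `W/W_A`.
Let `H` be the Hecke algebra over `R = ℤ[v,v⁻¹]` and `M` the spherical left `H`-module
with standard basis `{m_x : x ∈ W^A}` and action (via `act`) as in the paper:
`b_s·m_x = m_{sx} + v·m_x` (resp. `m_{sx} + v⁻¹·m_x`, resp. `(v+v⁻¹)·m_x`) when `sx > x`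
(resp. `sx < x`, resp. `sx = x`) in `W/W_A`.  Then for any expression
`x̲ = (s_{w 0}, …, s_{w (m-1)})`,
`m_{x̲} := b_{s_{w 0}} ⋯ b_{s_{w (m-1)}} · m_1 = Σ_{e̲ ⊆ x̲} v^{pdf(e̲)} m_{x̲^{e̲}}`,
the sum running over all `2^m` subexpressions, `x̲^{e̲}` being taken as the minimal
representative of its coset in `W/W_A`. -/
theorem deodhar_formula {H Msp : Type*} [Ring H] [AddCommGroup Msp]
    [Algebra (LaurentPolynomial ℤ) H] [Module (LaurentPolynomial ℤ) Msp]
    (cs : CoxeterSystem M W) (A : Set B)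
    (h : Module.Basis W (LaurentPolynomial ℤ) H)
    (h_one : h 1 = 1)
    (h_mul_lt : ∀ (i : B) (x : W), cs.length (cs.simple i * x) > cs.length x →
      h (cs.simple i) * h x = h (cs.simple i * x))
    (h_mul_gt : ∀ (i : B) (x : W), cs.length (cs.simple i * x) < cs.length x →
      h (cs.simple i) * h x = h (cs.simple i * x) +
        (((T (-1) : LaurentPolynomial ℤ)) - T 1) • h x)
    (msp : Module.Basis {x : W // IsMinRep cs A x} (LaurentPolynomial ℤ) Msp)
    (act : H →ₐ[LaurentPolynomial ℤ] Module.End (LaurentPolynomial ℤ) Msp)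
    (act_U : ∀ (i : B) (x : {x : W // IsMinRep cs A x})
      (hm : IsMinRep cs A (cs.simple i * x.1)),
      cs.length x.1 < cs.length (cs.simple i * x.1) →
      act (h (cs.simple i) + (T 1 : LaurentPolynomial ℤ) • h 1) (msp x) =
        msp ⟨cs.simple i * x.1, hm⟩ + (T 1 : LaurentPolynomial ℤ) • msp x)
    (act_D : ∀ (i : B) (x : {x : W // IsMinRep cs A x})
      (hm : IsMinRep cs A (cs.simple i * x.1)),
      cs.length (cs.simple i * x.1) < cs.length x.1 →
      act (h (cs.simple i) + (T 1 : LaurentPolynomial ℤ) • h 1) (msp x) =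
        msp ⟨cs.simple i * x.1, hm⟩ + (T (-1) : LaurentPolynomial ℤ) • msp x)
    (act_S : ∀ (i : B) (x : {x : W // IsMinRep cs A x}),
      x.1⁻¹ * cs.simple i * x.1 ∈ parabolic cs A →
      act (h (cs.simple i) + (T 1 : LaurentPolynomial ℤ) • h 1) (msp x) =
        ((T 1 : LaurentPolynomial ℤ) + T (-1)) • msp x)
    (m : ℕ) (w : Fin m → B) :
    act ((List.ofFn fun t : Fin m =>
        h (cs.simple (w t)) + (T 1 : LaurentPolynomial ℤ) • h 1).prod)
      (msp ⟨1, isMinRep_one cs A⟩) =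
    ∑ e : Fin m → Bool,
      (T (pdf cs A w e) : LaurentPolynomial ℤ) • msp (minRep cs A (suffixProd cs w e 0)) := by
  classical
  induction m with
  | zero =>
    rw [List.ofFn_zero, List.prod_nil, map_one, Fintype.sum_unique]
    have hsuf : ∀ e : Fin 0 → Bool, suffixProd cs w e 0 = 1 := by
      intro e
      simp [suffixProd]
    have hpdf : ∀ e : Fin 0 → Bool, pdf cs A w e = 0 := by
      intro e
      rw [pdf_eq_sum]
      simp
    rw [hsuf _, hpdf _]
    have hmr : minRep cs A 1 = ⟨1, isMinRep_one cs A⟩ :=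
      Subtype.ext (minRep_eq cs (isMinRep_one cs A) (one_mem _) (one_mul 1))
    rw [hmr, T_zero, one_smul, Module.End.one_apply]
  | succ m ih =>
    rw [List.ofFn_succ, List.prod_cons, map_mul, Module.End.mul_apply]
    have ih' := ih (w ∘ Fin.succ)
    simp only [Function.comp_apply] at ih'
    rw [ih', map_sum]
    rw [← Equiv.sum_comp (Fin.consEquiv fun _ : Fin (m + 1) => Bool)
      (fun e => (T (pdf cs A w e) : LaurentPolynomial ℤ) •
        msp (minRep cs A (suffixProd cs w e 0)))]
    have hconsEquiv : ∀ p : Bool × (Fin m → Bool),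
        (Fin.consEquiv fun _ : Fin (m + 1) => Bool) p = Fin.cons p.1 p.2 := fun p => rfl
    simp only [hconsEquiv]
    rw [Fintype.sum_prod_type, Fintype.sum_bool, ← Finset.sum_add_distrib]
    apply Finset.sum_congr rfl
    intro e' _
    have hsuffTrue : suffixProd cs w (Fin.cons true e') 0 =
        cs.simple (w 0) * suffixProd cs (w ∘ Fin.succ) e' 0 := by
      rw [suffixProd_cons_zero]
      simp
    have hsuffFalse : suffixProd cs w (Fin.cons false e') 0 =
        suffixProd cs (w ∘ Fin.succ) e' 0 := by
      rw [suffixProd_cons_zero]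
      simp
    obtain ⟨u₀, hu₀, h₀⟩ := minRep_coset cs (A := A) (suffixProd cs (w ∘ Fin.succ) e' 0)
    by_cases hS : (suffixProd cs (w ∘ Fin.succ) e' 0)⁻¹ * cs.simple (w 0) *
        suffixProd cs (w ∘ Fin.succ) e' 0 ∈ parabolic cs A
    · -- Stay case
      have hSz : (minRep cs A (suffixProd cs (w ∘ Fin.succ) e' 0)).1⁻¹ * cs.simple (w 0) *
          (minRep cs A (suffixProd cs (w ∘ Fin.succ) e' 0)).1 ∈ parabolic cs A := by
        rw [← h₀]
        have hrw : (suffixProd cs (w ∘ Fin.succ) e' 0 * u₀)⁻¹ * cs.simple (w 0) *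
            (suffixProd cs (w ∘ Fin.succ) e' 0 * u₀) =
            u₀⁻¹ * ((suffixProd cs (w ∘ Fin.succ) e' 0)⁻¹ * cs.simple (w 0) *
              suffixProd cs (w ∘ Fin.succ) e' 0) * u₀ := by group
        rw [hrw]
        exact mul_mem (mul_mem (inv_mem hu₀) hS) hu₀
      have hact := act_S (w 0) (minRep cs A (suffixProd cs (w ∘ Fin.succ) e' 0)) hSz
      have hmrT : (minRep cs A (cs.simple (w 0) * suffixProd cs (w ∘ Fin.succ) e' 0)).1 =
          (minRep cs A (suffixProd cs (w ∘ Fin.succ) e' 0)).1 := by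
        apply minRep_eq cs (minRep cs A (suffixProd cs (w ∘ Fin.succ) e' 0)).2
          (mul_mem hS hu₀)
        have hrw : (cs.simple (w 0) * suffixProd cs (w ∘ Fin.succ) e' 0) *
            (((suffixProd cs (w ∘ Fin.succ) e' 0)⁻¹ * cs.simple (w 0) *
              suffixProd cs (w ∘ Fin.succ) e' 0) * u₀) =
            (cs.simple (w 0) * cs.simple (w 0)) *
              (suffixProd cs (w ∘ Fin.succ) e' 0 * u₀) := by group
        rw [hrw, cs.simple_mul_simple_self, one_mul, h₀]
      have hdecS : ∀ c : Bool, DecorS cs A w (Fin.cons c e') 0 := fun c =>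
        (decorS_cons_zero cs w c e' A).mpr hS
      have hpdfT : pdf cs A w (Fin.cons true e') = 1 + pdf cs A (w ∘ Fin.succ) e' := by
        rw [pdf_cons]
        rw [if_pos (Or.inr ⟨hdecS true, rfl⟩)]
        rw [if_neg (by rintro (⟨_, hc⟩ | ⟨_, hc⟩) <;> exact absurd hc (by decide))]
        ring
      have hpdfF : pdf cs A w (Fin.cons false e') = (-1) + pdf cs A (w ∘ Fin.succ) e' := by
        rw [pdf_cons]
        rw [if_neg (by
          rintro (⟨hU, _⟩ | ⟨_, hc⟩)
          · exact hU.1 (hdecS false)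
          · exact absurd hc (by decide))]
        rw [if_pos (Or.inr ⟨hdecS false, rfl⟩)]
        ring
      rw [map_smul, hact, hsuffTrue, hsuffFalse, hpdfT, hpdfF]
      rw [Subtype.ext hmrT]
      rw [T_add, T_add]
      rw [smul_smul, mul_add, add_smul]
      rw [mul_comm (T (1 : ℤ)), mul_comm (T (-1 : ℤ))]
    · -- Up or Down case
      have hzNS : ¬ ((minRep cs A (suffixProd cs (w ∘ Fin.succ) e' 0)).1⁻¹ *
          cs.simple (w 0) * (minRep cs A (suffixProd cs (w ∘ Fin.succ) e' 0)).1 ∈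
            parabolic cs A) := by
        intro hc
        apply hS
        rw [← h₀] at hc
        have hrw : (suffixProd cs (w ∘ Fin.succ) e' 0)⁻¹ * cs.simple (w 0) *
            suffixProd cs (w ∘ Fin.succ) e' 0 =
            u₀ * ((suffixProd cs (w ∘ Fin.succ) e' 0 * u₀)⁻¹ * cs.simple (w 0) *
              (suffixProd cs (w ∘ Fin.succ) e' 0 * u₀)) * u₀⁻¹ := by group
        rw [hrw]
        exact mul_mem (mul_mem hu₀ hc) (inv_mem hu₀)
      have hmin : IsMinRep cs A (cs.simple (w 0) *
          (minRep cs A (suffixProd cs (w ∘ Fin.succ) e' 0)).1) :=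
        deodhar_lemma cs (minRep cs A (suffixProd cs (w ∘ Fin.succ) e' 0)).2 (w 0) hzNS
      have hmrT : (minRep cs A (cs.simple (w 0) * suffixProd cs (w ∘ Fin.succ) e' 0)).1 =
          cs.simple (w 0) * (minRep cs A (suffixProd cs (w ∘ Fin.succ) e' 0)).1 :=
        minRep_eq cs hmin hu₀ (by rw [mul_assoc, h₀])
      have hcLy : cosetLength cs A (suffixProd cs (w ∘ Fin.succ) e' 0) =
          cs.length (minRep cs A (suffixProd cs (w ∘ Fin.succ) e' 0)).1 :=
        cosetLength_eq_length_minRep cs _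
      have hcLsy : cosetLength cs A (cs.simple (w 0) * suffixProd cs (w ∘ Fin.succ) e' 0) =
          cs.length (cs.simple (w 0) * (minRep cs A (suffixProd cs (w ∘ Fin.succ) e' 0)).1)
          := by
        rw [cosetLength_eq_length_minRep, hmrT]
      have hnotS : ∀ c : Bool, ¬ DecorS cs A w (Fin.cons c e') 0 := fun c hd =>
        hS ((decorS_cons_zero cs w c e' A).mp hd)
      have hUiff : ∀ c : Bool, DecorU cs A w (Fin.cons c e') 0 ↔
          cs.length (minRep cs A (suffixProd cs (w ∘ Fin.succ) e' 0)).1 <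
            cs.length (cs.simple (w 0) *
              (minRep cs A (suffixProd cs (w ∘ Fin.succ) e' 0)).1) := by
        intro c
        unfold DecorU
        rw [suffixProd_cons_one, hcLy, hcLsy]
        constructor
        · exact fun hh => hh.2
        · exact fun hh => ⟨hnotS c, hh⟩
      have hDiff : ∀ c : Bool, DecorD cs A w (Fin.cons c e') 0 ↔
          cs.length (cs.simple (w 0) *
              (minRep cs A (suffixProd cs (w ∘ Fin.succ) e' 0)).1) <
            cs.length (minRep cs A (suffixProd cs (w ∘ Fin.succ) e' 0)).1 := by
        intro c
        unfold DecorD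
        rw [suffixProd_cons_one, hcLy, hcLsy]
        constructor
        · exact fun hh => hh.2
        · exact fun hh => ⟨hnotS c, hh⟩
      have hsub : minRep cs A (cs.simple (w 0) * suffixProd cs (w ∘ Fin.succ) e' 0) =
          ⟨cs.simple (w 0) * (minRep cs A (suffixProd cs (w ∘ Fin.succ) e' 0)).1, hmin⟩ :=
        Subtype.ext hmrT
      rcases cs.length_simple_mul (minRep cs A (suffixProd cs (w ∘ Fin.succ) e' 0)).1 (w 0)
        with hUlen | hDlen
      · -- Up case
        have hlt : cs.length (minRep cs A (suffixProd cs (w ∘ Fin.succ) e' 0)).1 <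
            cs.length (cs.simple (w 0) *
              (minRep cs A (suffixProd cs (w ∘ Fin.succ) e' 0)).1) := by omega
        have hact := act_U (w 0) (minRep cs A (suffixProd cs (w ∘ Fin.succ) e' 0)) hmin hlt
        have hpdfT : pdf cs A w (Fin.cons true e') = pdf cs A (w ∘ Fin.succ) e' := by
          rw [pdf_cons]
          rw [if_neg (by
            rintro (⟨_, hc⟩ | ⟨hs, _⟩)
            · exact absurd hc (by decide)
            · exact hnotS true hs)]
          rw [if_neg (by
            rintro (⟨_, hc⟩ | ⟨hs, hc⟩)
            · exact absurd hc (by decide)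
            · exact hnotS true hs)]
          ring
        have hpdfF : pdf cs A w (Fin.cons false e') = 1 + pdf cs A (w ∘ Fin.succ) e' := by
          rw [pdf_cons]
          rw [if_pos (Or.inl ⟨(hUiff false).mpr hlt, rfl⟩)]
          rw [if_neg (by
            rintro (⟨hD, _⟩ | ⟨hs, _⟩)
            · exact absurd ((hDiff false).mp hD) (by omega)
            · exact hnotS false hs)]
          ring
        rw [map_smul, hact, hsuffTrue, hsuffFalse, hpdfT, hpdfF, hsub, T_add]
        rw [smul_add, smul_smul]
        rw [mul_comm (T (1 : ℤ))]
      · -- Down case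
        have hlt : cs.length (cs.simple (w 0) *
            (minRep cs A (suffixProd cs (w ∘ Fin.succ) e' 0)).1) <
              cs.length (minRep cs A (suffixProd cs (w ∘ Fin.succ) e' 0)).1 := by omega
        have hact := act_D (w 0) (minRep cs A (suffixProd cs (w ∘ Fin.succ) e' 0)) hmin hlt
        have hpdfT : pdf cs A w (Fin.cons true e') = pdf cs A (w ∘ Fin.succ) e' := by
          rw [pdf_cons]
          rw [if_neg (by
            rintro (⟨_, hc⟩ | ⟨hs, _⟩)
            · exact absurd hc (by decide)
            · exact hnotS true hs)]
          rw [if_neg (by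
            rintro (⟨_, hc⟩ | ⟨hs, hc⟩)
            · exact absurd hc (by decide)
            · exact hnotS true hs)]
          ring
        have hpdfF : pdf cs A w (Fin.cons false e') =
            (-1) + pdf cs A (w ∘ Fin.succ) e' := by
          rw [pdf_cons]
          rw [if_neg (by
            rintro (⟨hU, _⟩ | ⟨hs, _⟩)
            · exact absurd ((hUiff false).mp hU) (by omega)
            · exact hnotS false hs)]
          rw [if_pos (Or.inl ⟨(hDiff false).mpr hlt, rfl⟩)]
          ring
        rw [map_smul, hact, hsuffTrue, hsuffFalse, hpdfT, hpdfF, hsub, T_add]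
        rw [smul_add, smul_smul]
        rw [mul_comm (T (-1 : ℤ))]
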